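/- Let S be countable, W compact, E = W^S, D the triple-norm space of functions with Σ_x Δ_f(x) < ∞. Suppose rates c_Λ(η,dζ) (indexed by finite Λ ⊆ S) satisfy K := sup_x Σ_{Λ∋x} c_Λ < ∞ where c_Λ = sup_η c_Λ(η, W^Λ). Then the operator Af(η) = Σ_Λ ∫ c_Λ(η,dζ)(f(η^ζ) − f(η)) is well-defined on D and satisfies ‖Af‖_∞ ≤ K·|||f||| for all f ∈ D; in particular A: (D,‖·‖_D) → (C(E),‖·‖_∞) is a bounded linear operator. -/

import Mathlib

open MeasureTheory

/-- The configuration `η^ζ` equal to `ζ` on `Λ` and to `η` off `Λ`. -/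
def patch {S W : Type*} [DecidableEq S] (η : S → W) (Λ : Finset S) (ζ : {x // x ∈ Λ} → W) : S → W :=
  fun x => if h : x ∈ Λ then ζ ⟨x, h⟩ else η x

/-- The oscillation `Δ_f(x)` of `f : C(W^S, ℝ)` in the coordinate `x`. -/
noncomputable def Delta {S W : Type*} [TopologicalSpace W]
    (f : C((S → W), ℝ)) (x : S) : ℝ :=
  sSup {d : ℝ | ∃ η ζ : S → W, (∀ y : S, y ≠ x → η y = ζ y) ∧ d = |f η - f ζ|}

set_option linter.unusedSectionVars false
section Aux

variable {S W : Type*} [DecidableEq S] [MetricSpace W] [CompactSpace W]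

lemma delta_bddAbove (f : C((S → W), ℝ)) (x : S) :
    BddAbove {d : ℝ | ∃ η ζ : S → W, (∀ y : S, y ≠ x → η y = ζ y) ∧ d = |f η - f ζ|} := by
  refine ⟨2 * ‖f‖, ?_⟩
  rintro d ⟨a, b, -, rfl⟩
  have h1 : |f a| ≤ ‖f‖ := by
    rw [← Real.norm_eq_abs]; exact f.norm_coe_le_norm a
  have h2 : |f b| ≤ ‖f‖ := by
    rw [← Real.norm_eq_abs]; exact f.norm_coe_le_norm b
  calc |f a - f b| ≤ |f a| + |f b| := abs_sub _ _
    _ ≤ 2 * ‖f‖ := by linarith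

lemma delta_nonneg (f : C((S → W), ℝ)) (x : S) : 0 ≤ Delta f x := by
  by_cases h : Nonempty (S → W)
  · obtain ⟨a⟩ := h
    refine le_csSup (delta_bddAbove f x) ⟨a, a, fun _ _ => rfl, by simp⟩
  · have : {d : ℝ | ∃ η ζ : S → W, (∀ y : S, y ≠ x → η y = ζ y) ∧ d = |f η - f ζ|} = ∅ := by
      ext d; simp only [Set.mem_setOf_eq, Set.mem_empty_iff_false, iff_false]
      rintro ⟨a, -, -⟩; exact h ⟨a⟩
    rw [Delta, this, Real.sSup_empty]

lemma abs_le_delta (f : C((S → W), ℝ)) (x : S) (a b : S → W)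
    (hab : ∀ y : S, y ≠ x → a y = b y) : |f a - f b| ≤ Delta f x :=
  le_csSup (delta_bddAbove f x) ⟨a, b, hab, rfl⟩

lemma key_bound (f : C((S → W), ℝ)) (Λ : Finset S) :
    ∀ (a b : S → W), (∀ y ∉ Λ, a y = b y) → |f a - f b| ≤ ∑ x ∈ Λ, Delta f x := by
  classical
  induction Λ using Finset.induction with
  | empty =>
    intro a b h
    have : a = b := funext fun y => h y (Finset.notMem_empty y)
    simp [this]
  | @insert z s hz ih =>
    intro a b h
    set a' : S → W := Function.update a z (b z) with ha'
    have h1 : ∀ y ∉ s, a' y = b y := by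
      intro y hy
      by_cases hyz : y = z
      · subst hyz; simp [ha']
      · rw [ha', Function.update_of_ne hyz]
        exact h y (by simp [hyz, hy])
    have h2 : ∀ y : S, y ≠ z → a y = a' y := by
      intro y hy; rw [ha', Function.update_of_ne hy]
    calc |f a - f b| ≤ |f a - f a'| + |f a' - f b| := abs_sub_le _ _ _
      _ ≤ Delta f z + ∑ x ∈ s, Delta f x :=
        add_le_add (abs_le_delta f z a a' h2) (ih a' b h1)
      _ = ∑ x ∈ insert z s, Delta f x := (Finset.sum_insert hz).symm

end Aux

/-- Interacting particle systems (Liggett): let `c_Λ(η, dζ)` be transition rates indexed by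
finite `Λ ⊆ S` with `K ≥ sup_x Σ_{Λ ∋ x} sup_η c_Λ(η, W^Λ)`. Then for every `f` with
`|||f||| = Σ_x Δ_f(x) < ∞`, the generator
`Af(η) = Σ_Λ ∫ c_Λ(η,dζ) (f(η^ζ) - f(η))` is well-defined (the sum over `Λ` converges)
and satisfies `‖Af‖_∞ ≤ K · |||f|||`. -/
theorem stmt_16 {S W : Type*} [DecidableEq S] [Countable S] [MetricSpace W] [CompactSpace W]
    [MeasurableSpace W] [BorelSpace W]
    (c : ∀ Λ : Finset S, (S → W) → Measure ({x // x ∈ Λ} → W))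
    [hfin : ∀ (Λ : Finset S) (η : S → W), IsFiniteMeasure (c Λ η)]
    (K : ℝ) (hKnn : 0 ≤ K)
    (hK : ∀ x : S,
      ∑' Λ : {Λ : Finset S // x ∈ Λ}, (⨆ η : S → W, c (Λ : Finset S) η Set.univ)
        ≤ ENNReal.ofReal K)
    (f : C((S → W), ℝ)) (hf : Summable fun x : S => Delta f x) (η : S → W) :
    (Summable fun Λ : Finset S => ∫ ζ, (f (patch η Λ ζ) - f η) ∂(c Λ η)) ∧
    |∑' Λ : Finset S, ∫ ζ, (f (patch η Λ ζ) - f η) ∂(c Λ η)| ≤ K * ∑' x : S, Delta f x := by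
  classical
  set μ : Finset S → ENNReal := fun Λ => c Λ η Set.univ with hμ
  set F : Finset S → ENNReal := fun Λ => ENNReal.ofReal (∑ x ∈ Λ, Delta f x) * μ Λ with hF
  -- pointwise integral bound
  have hint : ∀ Λ : Finset S,
      ‖∫ ζ, (f (patch η Λ ζ) - f η) ∂(c Λ η)‖ ≤ (∑ x ∈ Λ, Delta f x) * (μ Λ).toReal := by
    intro Λ
    refine norm_integral_le_of_norm_le_const ?_
    filter_upwards with ζ
    rw [Real.norm_eq_abs]
    refine key_bound f Λ _ _ ?_
    intro y hy
    simp [patch, hy]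
  -- tsum bound in ENNReal
  have hDsum : ∑' x : S, ENNReal.ofReal (Delta f x) = ENNReal.ofReal (∑' x : S, Delta f x) :=
    (ENNReal.ofReal_tsum_of_nonneg (fun x => delta_nonneg f x) hf).symm
  have hFsum : ∑' Λ : Finset S, F Λ ≤ ENNReal.ofReal K * ENNReal.ofReal (∑' x : S, Delta f x) := by
    have step1 : ∀ Λ : Finset S, F Λ =
        ∑' x : S, (if x ∈ Λ then ENNReal.ofReal (Delta f x) * μ Λ else 0) := by
      intro Λ
      simp only [hF]
      rw [ENNReal.ofReal_sum_of_nonneg (fun x _ => delta_nonneg f x), Finset.sum_mul]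
      rw [show (∑' x : S, if x ∈ Λ then ENNReal.ofReal (Delta f x) * μ Λ else 0)
          = ∑ x ∈ Λ, (if x ∈ Λ then ENNReal.ofReal (Delta f x) * μ Λ else 0) from
        tsum_eq_sum (fun x hx => if_neg hx)]
      exact Finset.sum_congr rfl fun x hx => (if_pos hx).symm
    calc ∑' Λ : Finset S, F Λ
        = ∑' (Λ : Finset S) (x : S), (if x ∈ Λ then ENNReal.ofReal (Delta f x) * μ Λ else 0) := by
          exact tsum_congr step1
      _ = ∑' (x : S) (Λ : Finset S), (if x ∈ Λ then ENNReal.ofReal (Delta f x) * μ Λ else 0) :=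
          ENNReal.tsum_comm
      _ = ∑' x : S, ENNReal.ofReal (Delta f x) * ∑' Λ : Finset S, (if x ∈ Λ then μ Λ else 0) := by
          refine tsum_congr fun x => ?_
          rw [← ENNReal.tsum_mul_left]
          exact tsum_congr fun Λ => by split <;> simp
      _ ≤ ∑' x : S, ENNReal.ofReal (Delta f x) * ENNReal.ofReal K := by
          refine ENNReal.tsum_le_tsum fun x => ?_
          refine mul_le_mul_right ?_ _
          have h1 : ∑' Λ : Finset S, (if x ∈ Λ then μ Λ else 0)
              = ∑' Λ : {Λ : Finset S // x ∈ Λ}, μ ↑Λ := by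
            refine (tsum_congr fun Λ => ?_).trans (tsum_subtype {Λ : Finset S | x ∈ Λ} μ).symm
            by_cases h : x ∈ Λ <;> simp [Set.indicator_apply, h]
          rw [h1]
          refine le_trans (ENNReal.tsum_le_tsum fun Λ => ?_) (hK x)
          exact le_iSup (fun η' => c (Λ : Finset S) η' Set.univ) η
      _ = ENNReal.ofReal K * ∑' x : S, ENNReal.ofReal (Delta f x) := by
          rw [ENNReal.tsum_mul_right, mul_comm]
      _ = ENNReal.ofReal K * ENNReal.ofReal (∑' x : S, Delta f x) := by rw [hDsum]
  have hFne : ∑' Λ : Finset S, F Λ ≠ ⊤ :=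
    ne_top_of_le_ne_top (by finiteness) hFsum
  have hFΛne : ∀ Λ : Finset S, F Λ ≠ ⊤ := by
    intro Λ
    exact ne_top_of_le_ne_top hFne (ENNReal.le_tsum Λ)
  have hFtoReal : ∀ Λ : Finset S, (F Λ).toReal = (∑ x ∈ Λ, Delta f x) * (μ Λ).toReal := by
    intro Λ
    rw [hF, ENNReal.toReal_mul, ENNReal.toReal_ofReal
      (Finset.sum_nonneg fun x _ => delta_nonneg f x)]
  have hsumF : Summable fun Λ : Finset S => (F Λ).toReal := ENNReal.summable_toReal hFne
  have hsum1 : Summable fun Λ : Finset S => (∑ x ∈ Λ, Delta f x) * (μ Λ).toReal := by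
    refine hsumF.congr fun Λ => hFtoReal Λ
  have hsum : Summable fun Λ : Finset S => ∫ ζ, (f (patch η Λ ζ) - f η) ∂(c Λ η) :=
    Summable.of_norm_bounded hsum1 hint
  refine ⟨hsum, ?_⟩
  have hnorms : Summable fun Λ : Finset S => ‖∫ ζ, (f (patch η Λ ζ) - f η) ∂(c Λ η)‖ :=
    Summable.of_nonneg_of_le (fun Λ => norm_nonneg _) hint hsum1
  calc |∑' Λ : Finset S, ∫ ζ, (f (patch η Λ ζ) - f η) ∂(c Λ η)|
      ≤ ∑' Λ : Finset S, ‖∫ ζ, (f (patch η Λ ζ) - f η) ∂(c Λ η)‖ := by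
        rw [← Real.norm_eq_abs]; exact norm_tsum_le_tsum_norm hnorms
    _ ≤ ∑' Λ : Finset S, (∑ x ∈ Λ, Delta f x) * (μ Λ).toReal := Summable.tsum_le_tsum hint hnorms hsum1
    _ = ∑' Λ : Finset S, (F Λ).toReal := by exact tsum_congr fun Λ => (hFtoReal Λ).symm
    _ = (∑' Λ : Finset S, F Λ).toReal := (ENNReal.tsum_toReal_eq hFΛne).symm
    _ ≤ (ENNReal.ofReal K * ENNReal.ofReal (∑' x : S, Delta f x)).toReal :=
        ENNReal.toReal_mono (by finiteness) hFsum
    _ = K * ∑' x : S, Delta f x := by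
        rw [ENNReal.toReal_mul, ENNReal.toReal_ofReal hKnn,
          ENNReal.toReal_ofReal (tsum_nonneg fun x => delta_nonneg f x)]
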